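/- Let n ≥ 3 be an integer. If n is odd, then the clique number and the chromatic number of Γ_N(D_n) both equal τ(n) − 1. If n = 2^α n' with n' odd and α ≥ 1, then the clique number and the chromatic number of Γ_N(D_n) both equal (2α + 1)τ(n') − 3. In particular, Γ_N(D_n) is weakly perfect (its clique number equals its chromatic number). -/

import Mathlib

open scoped Pointwise

/-- The permutability graph of non-normal subgroups `Γ_N(G)`: vertices are the
non-normal (hence proper) subgroups of `G`, and two distinct vertices are adjacent
iff the corresponding subgroups permute, i.e. `HK = KH` as subsets of `G`. -/
def permGraphN (G : Type*) [Group G] :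
    SimpleGraph {H : Subgroup G // ¬ H.Normal} where
  Adj H K := H ≠ K ∧ (H.1 : Set G) * (K.1 : Set G) = (K.1 : Set G) * (H.1 : Set G)
  symm := ⟨fun _ _ ⟨hne, h⟩ => ⟨hne.symm, h.symm⟩⟩
  loopless := ⟨fun _ ⟨hne, _⟩ => hne rfl⟩

/-- The permutability graph of subgroups `Γ(G)`: vertices are the proper nontrivial
subgroups of `G`, and two distinct vertices are adjacent iff the corresponding
subgroups permute, i.e. `HK = KH` as subsets of `G`. -/
def permGraph (G : Type*) [Group G] :
    SimpleGraph {H : Subgroup G // H ≠ ⊥ ∧ H ≠ ⊤} where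
  Adj H K := H ≠ K ∧ (H.1 : Set G) * (K.1 : Set G) = (K.1 : Set G) * (H.1 : Set G)
  symm := ⟨fun _ _ ⟨hne, h⟩ => ⟨hne.symm, h.symm⟩⟩
  loopless := ⟨fun _ ⟨hne, _⟩ => hne rfl⟩

open DihedralGroup

namespace PermDih

variable {n : ℕ}

/-- divisibility bridge between `ZMod n` and `ℕ`. -/
lemma zdvd_iff [NeZero n] {d : ℕ} (hd : d ∣ n) (x : ZMod n) :
    (d : ZMod n) ∣ x ↔ d ∣ x.val := by
  constructor
  · rintro ⟨k, rfl⟩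
    have : ((d : ZMod n) * k).val = d % n * k.val % n := by
      rw [ZMod.val_mul, ZMod.val_natCast]
    rw [this, Nat.dvd_mod_iff hd]
    exact Dvd.dvd.mul_right (Nat.dvd_mod_iff hd |>.mpr dvd_rfl) _
  · rintro ⟨k, hk⟩
    refine ⟨(k : ZMod n), ?_⟩
    have : ((x.val : ℕ) : ZMod n) = x := ZMod.natCast_rightInverse x
    rw [← this, hk]
    push_cast; ring

lemma zdvd_cast [NeZero n] {d e : ℕ} (hd : d ∣ n) (he : e ∣ n) (h : (d : ZMod n) ∣ (e : ZMod n)) :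
    d ∣ e := by
  rw [zdvd_iff hd, ZMod.val_natCast] at h
  exact (Nat.dvd_mod_iff hd).mp h

lemma cast_dvd_cast_of_dvd {d e : ℕ} (h : d ∣ e) : (d : ZMod n) ∣ (e : ZMod n) :=
  Nat.cast_dvd_cast h

/-- Bezout in `ZMod n`. -/
lemma gcd_dvd_iff {d e : ℕ} (x : ZMod n) :
    ((Nat.gcd d e : ℕ) : ZMod n) ∣ x ↔ ∃ k l : ZMod n, x = d * k + e * l := by
  constructor
  · rintro ⟨m, rfl⟩
    refine ⟨(Nat.gcdA d e : ZMod n) * m, (Nat.gcdB d e : ZMod n) * m, ?_⟩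
    have h := Nat.gcd_eq_gcd_ab d e
    have : ((Nat.gcd d e : ℕ) : ZMod n) = (d : ZMod n) * (Nat.gcdA d e : ZMod n)
        + (e : ZMod n) * (Nat.gcdB d e : ZMod n) := by
      have := congrArg (fun z : ℤ => (z : ZMod n)) h
      push_cast at this
      exact_mod_cast this
    rw [this]; ring
  · rintro ⟨k, l, rfl⟩
    exact dvd_add ((cast_dvd_cast_of_dvd (Nat.gcd_dvd_left d e)).mul_right k)
      ((cast_dvd_cast_of_dvd (Nat.gcd_dvd_right d e)).mul_right l)

/-- The subgroup of `DihedralGroup n` generated by `r d` and `sr i`. -/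
def SubH (d : ℕ) (i : ZMod n) : Subgroup (DihedralGroup n) where
  carrier := {x | match x with
    | .r u => (d : ZMod n) ∣ u
    | .sr u => (d : ZMod n) ∣ u - i}
  one_mem' := by show (d : ZMod n) ∣ 0; exact dvd_zero _
  inv_mem' := by
    rintro (u | u) h
    · exact (dvd_neg).mpr h
    · exact h
  mul_mem' := by
    rintro (u | u) (v | v) hu hv
    · exact dvd_add hu hv
    · show (d : ZMod n) ∣ v - u - i
      have : v - u - i = (v - i) - u := by ring
      rw [this]; exact dvd_sub hv hu
    · show (d : ZMod n) ∣ u + v - i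
      have : u + v - i = (u - i) + v := by ring
      rw [this]; exact dvd_add hu hv
    · show (d : ZMod n) ∣ v - u
      have : v - u = (v - i) - (u - i) := by ring
      rw [this]; exact dvd_sub hv hu

@[simp] lemma r_mem_SubH {d : ℕ} {i u : ZMod n} : r u ∈ SubH d i ↔ (d : ZMod n) ∣ u := Iff.rfl
@[simp] lemma sr_mem_SubH {d : ℕ} {i u : ZMod n} : sr u ∈ SubH d i ↔ (d : ZMod n) ∣ u - i := Iff.rfl

section
/-- Description of the product set `SubH d i * SubH e j`. -/
lemma prod_SubH_eq (d e : ℕ) (i j : ZMod n) :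
    (SubH d i : Set (DihedralGroup n)) * (SubH e j : Set (DihedralGroup n)) =
      {x | match x with
        | .r u => ((Nat.gcd d e : ℕ) : ZMod n) ∣ u ∨ ((Nat.gcd d e : ℕ) : ZMod n) ∣ u - (j - i)
        | .sr u => ((Nat.gcd d e : ℕ) : ZMod n) ∣ u - i ∨ ((Nat.gcd d e : ℕ) : ZMod n) ∣ u - j} := by
  set g : ZMod n := ((Nat.gcd d e : ℕ) : ZMod n) with hg
  have hgd : g ∣ (d : ZMod n) := cast_dvd_cast_of_dvd (Nat.gcd_dvd_left d e)
  have hge : g ∣ (e : ZMod n) := cast_dvd_cast_of_dvd (Nat.gcd_dvd_right d e)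
  ext x
  constructor
  · rintro ⟨a, ha, b, hb, rfl⟩
    rcases a with u | u <;> rcases b with v | v
    · -- r u * r v = r (u+v)
      exact Or.inl (dvd_add (hgd.trans ha) (hge.trans hb))
    · -- r u * sr v = sr (v - u)
      refine Or.inr ?_
      have : v - u - j = (v - j) - u := by ring
      show g ∣ (v - u) - j
      rw [this]; exact dvd_sub (hge.trans hb) (hgd.trans ha)
    · -- sr u * r v = sr (u + v)
      refine Or.inl ?_
      have : u + v - i = (u - i) + v := by ring
      show g ∣ (u + v) - i
      rw [this]; exact dvd_add (hgd.trans ha) (hge.trans hb)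
    · -- sr u * sr v = r (v - u)
      refine Or.inr ?_
      have : v - u - (j - i) = (v - j) - (u - i) := by ring
      show g ∣ (v - u) - (j - i)
      rw [this]; exact dvd_sub (hge.trans hb) (hgd.trans ha)
  · rcases x with u | u <;> rintro (h | h)
    · -- r u with g ∣ u : u = d k + e l, r u = r (d k) * r (e l)
      obtain ⟨k, l, rfl⟩ := (gcd_dvd_iff _).mp h
      exact ⟨r (d * k), Dvd.intro k rfl, r (e * l), Dvd.intro l rfl, rfl⟩
    · -- r u with g ∣ u - (j - i) : r u = sr (i - d k) * sr (j + e l)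
      obtain ⟨k, l, hu⟩ := (gcd_dvd_iff _).mp h
      refine ⟨sr (i - d * k), ?_, sr (j + e * l), ?_, ?_⟩
      · show (d : ZMod n) ∣ i - d * k - i
        have : i - (d : ZMod n) * k - i = -(d * k) := by ring
        rw [this]; exact (Dvd.intro k rfl).neg_right
      · show (e : ZMod n) ∣ j + e * l - j
        have : j + (e : ZMod n) * l - j = e * l := by ring
        rw [this]; exact Dvd.intro l rfl
      · show sr _ * sr _ = r u
        rw [sr_mul_sr]
        congr 1
        linear_combination -hu
    · -- sr u with g ∣ u - i : sr u = sr (i + d k) * r (e l)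
      obtain ⟨k, l, hu⟩ := (gcd_dvd_iff _).mp h
      refine ⟨sr (i + d * k), ?_, r (e * l), Dvd.intro l rfl, ?_⟩
      · show (d : ZMod n) ∣ i + d * k - i
        have : i + (d : ZMod n) * k - i = d * k := by ring
        rw [this]; exact Dvd.intro k rfl
      · show sr _ * r _ = sr u
        rw [sr_mul_r]; congr 1; linear_combination -hu
    · -- sr u with g ∣ u - j : sr u = r (- d k) * sr (j + e l)
      obtain ⟨k, l, hu⟩ := (gcd_dvd_iff _).mp h
      refine ⟨r (-(d * k)), ((Dvd.intro k rfl).neg_right : (d : ZMod n) ∣ -(d*k)), sr (j + e * l), ?_, ?_⟩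
      · show (e : ZMod n) ∣ j + e * l - j
        have : j + (e : ZMod n) * l - j = e * l := by ring
        rw [this]; exact Dvd.intro l rfl
      · show r _ * sr _ = sr u
        rw [r_mul_sr]; congr 1; linear_combination -hu
end
section
/-- Sufficient condition for permuting. -/
lemma SubH_mul_comm {d e : ℕ} {i j : ZMod n}
    (h : ((Nat.gcd d e : ℕ) : ZMod n) ∣ 2 * (i - j)) :
    (SubH d i : Set (DihedralGroup n)) * (SubH e j : Set (DihedralGroup n)) =
      (SubH e j : Set (DihedralGroup n)) * (SubH d i : Set (DihedralGroup n)) := by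
  rw [prod_SubH_eq, prod_SubH_eq, Nat.gcd_comm e d]
  ext x
  rcases x with u | u
  · show _ ∨ _ ↔ _ ∨ _
    constructor
    · rintro (hh | hh)
      · exact Or.inl hh
      · refine Or.inr ?_
        have e2 : u - (i - j) = (u - (j - i)) - 2 * (i - j) := by ring
        rw [e2]; exact dvd_sub hh h
    · rintro (hh | hh)
      · exact Or.inl hh
      · refine Or.inr ?_
        have e2 : u - (j - i) = (u - (i - j)) + 2 * (i - j) := by ring
        rw [e2]; exact dvd_add hh h
  · show _ ∨ _ ↔ _ ∨ _
    exact or_comm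
end

section
/-- Necessary condition extracted from permuting. -/
lemma SubH_adj_dvd {d e : ℕ} {i j : ZMod n}
    (h : (SubH d i : Set (DihedralGroup n)) * (SubH e j : Set (DihedralGroup n)) =
      (SubH e j : Set (DihedralGroup n)) * (SubH d i : Set (DihedralGroup n))) :
    ((Nat.gcd d e : ℕ) : ZMod n) ∣ 2 * (i - j) := by
  have hmem : DihedralGroup.r (i - j) ∈
      (SubH e j : Set (DihedralGroup n)) * (SubH d i : Set (DihedralGroup n)) := by
    rw [prod_SubH_eq]
    right
    show ((Nat.gcd e d : ℕ) : ZMod n) ∣ (i - j) - (i - j)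
    simp
  rw [← h, prod_SubH_eq] at hmem
  rcases hmem with hh | hh
  · exact hh.mul_left 2
  · have e2 : 2 * (i - j) = (i - j) - (j - i) := by ring
    rw [e2]; exact hh
end

section
variable [NeZero n]

lemma SubH_normal_of_dvd_two {d : ℕ} {i : ZMod n} (h : d ∣ 2) : (SubH d i).Normal := by
  have h2 : (d : ZMod n) ∣ (2 : ZMod n) := by
    have := cast_dvd_cast_of_dvd (n := n) h; simpa using this
  constructor
  rintro (u | u) hu (v | v)
  · show r v * r u * (r v)⁻¹ ∈ _
    have hinv : (r v : DihedralGroup n)⁻¹ = r (-v) := rfl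
    rw [hinv]
    show r (v + u + -v) ∈ _
    have : v + u + -v = u := by ring
    rw [this]; exact hu
  · show sr v * r u * (sr v)⁻¹ ∈ _
    have hinv : (sr v : DihedralGroup n)⁻¹ = sr v := rfl
    rw [hinv]
    show r ((v:ZMod n) - (v + u)) ∈ _
    have : (v:ZMod n) - (v + u) = -u := by ring
    rw [this]
    exact (dvd_neg).mpr hu
  · show r v * sr u * (r v)⁻¹ ∈ _
    have hinv : (r v : DihedralGroup n)⁻¹ = r (-v) := rfl
    rw [hinv]
    show sr (u - v + -v) ∈ _
    refine sr_mem_SubH.mpr ?_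
    have : u - v + -v - i = (u - i) - 2 * v := by ring
    rw [this]
    exact dvd_sub hu (h2.mul_right v)
  · show sr v * sr u * (sr v)⁻¹ ∈ _
    have hinv : (sr v : DihedralGroup n)⁻¹ = sr v := rfl
    rw [hinv]
    show sr (v - (u - v)) ∈ _
    refine sr_mem_SubH.mpr ?_
    have : v - (u - v) - i = -(u - i) + 2 * v - 2 * i := by ring
    rw [this]
    exact dvd_sub (dvd_add (dvd_neg.mpr hu) (h2.mul_right v)) (h2.mul_right i)
end
section
variable [NeZero n]

lemma SubH_d_eq {d e : ℕ} {i j : ZMod n} (hd : d ∣ n) (he : e ∣ n)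
    (h : (SubH d i : Subgroup (DihedralGroup n)) = SubH e j) : d = e := by
  have h1 : ∀ (p q : ℕ) (x y : ZMod n), p ∣ n → q ∣ n →
      (SubH p x : Subgroup (DihedralGroup n)) ≤ SubH q y → q ∣ p := by
    intro p q x y hp hq hle
    have : r ((p : ZMod n)) ∈ SubH p x := r_mem_SubH.mpr dvd_rfl
    have hm := hle this
    exact zdvd_cast hq hp (r_mem_SubH.mp hm)
  exact Nat.dvd_antisymm (h1 e d j i he hd h.ge) (h1 d e i j hd he h.le)

lemma SubH_eq_iff {d : ℕ} {i j : ZMod n} (hd : d ∣ n) :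
    (SubH d i : Subgroup (DihedralGroup n)) = SubH d j ↔ (d : ZMod n) ∣ i - j := by
  constructor
  · intro h
    have : sr i ∈ SubH d i := sr_mem_SubH.mpr (by simp)
    rw [h] at this
    exact sr_mem_SubH.mp this
  · intro h
    ext x
    rcases x with u | u
    · rfl
    · show (d:ZMod n) ∣ u - i ↔ (d:ZMod n) ∣ u - j
      constructor
      · intro hh
        have e1 : u - j = (u - i) + (i - j) := by ring
        rw [e1]; exact dvd_add hh h
      · intro hh
        have e1 : u - i = (u - j) - (i - j) := by ring
        rw [e1]; exact dvd_sub hh h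

lemma SubH_not_normal (hn : 3 ≤ n) {d : ℕ} {i : ZMod n} (hd : d ∣ n) (h2 : 2 < d) :
    ¬ (SubH d i : Subgroup (DihedralGroup n)).Normal := by
  intro hN
  have hmem : sr i ∈ SubH d i := sr_mem_SubH.mpr (by simp)
  have hc := hN.conj_mem _ hmem (r 1)
  have hinv : (r (1:ZMod n))⁻¹ = r (-1) := rfl
  rw [hinv] at hc
  have he : r (1:ZMod n) * sr i * r (-1) = sr (i - 2) := by
    show sr (i - 1 + -1) = sr (i - 2)
    congr 1; ring
  rw [he] at hc
  have : (d : ZMod n) ∣ i - 2 - i := sr_mem_SubH.mp hc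
  have h2' : (d : ZMod n) ∣ ((2:ℕ) : ZMod n) := by
    have e1 : i - 2 - i = -((2:ℕ) : ZMod n) := by push_cast; ring
    rw [e1] at this
    exact (dvd_neg).mp this
  have := zdvd_iff hd (((2:ℕ)) : ZMod n) |>.mp h2'
  rw [ZMod.val_natCast, Nat.mod_eq_of_lt (by omega)] at this
  have := Nat.le_of_dvd (by norm_num) this
  omega

lemma exists_sr_of_not_normal {K : Subgroup (DihedralGroup n)} (h : ¬ K.Normal) :
    ∃ i, sr i ∈ K := by
  by_contra hc
  push_neg at hc
  apply h
  constructor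
  rintro (u | u) hu g
  · rcases g with v | v
    · have hinv : (r v : DihedralGroup n)⁻¹ = r (-v) := rfl
      rw [hinv]
      show r (v + u + -v) ∈ K
      have : v + u + -v = u := by ring
      rw [this]; exact hu
    · have hinv : (sr v : DihedralGroup n)⁻¹ = sr v := rfl
      rw [hinv]
      show r (v - (v + u)) ∈ K
      have : v - (v + u) = -u := by ring
      rw [this]
      exact (inv_mem hu : (r u)⁻¹ ∈ K)
  · exact absurd hu (hc u)

lemma classify (hn : 3 ≤ n) (K : Subgroup (DihedralGroup n)) (hK : ¬ K.Normal) :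
    ∃ (d : ℕ) (i : ZMod n), d ∣ n ∧ 2 < d ∧ K = SubH d i := by
  obtain ⟨i, hi⟩ := exists_sr_of_not_normal hK
  set S : Set ℕ := {m : ℕ | 0 < m ∧ r ((m : ℕ) : ZMod n) ∈ K} with hS
  have hnS : n ∈ S := by
    refine ⟨by omega, ?_⟩
    rw [ZMod.natCast_self]
    exact one_mem K
  set d := sInf S with hdd
  obtain ⟨hdpos, hdK⟩ : d ∈ S := Nat.sInf_mem ⟨n, hnS⟩
  have multiples : ∀ a : ℕ, r ((d * a : ℕ) : ZMod n) ∈ K := by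
    intro a
    induction a with
    | zero => simpa using one_mem K
    | succ a ih =>
      have : ((d * (a+1) : ℕ) : ZMod n) = ((d*a : ℕ) : ZMod n) + ((d:ℕ) : ZMod n) := by
        push_cast; ring
      rw [this]
      exact mul_mem ih hdK
  have small_zero : ∀ m : ℕ, m < d → r ((m : ℕ) : ZMod n) ∈ K → m = 0 := by
    intro m hm hmem
    by_contra hm0
    exact absurd (Nat.sInf_le (show m ∈ S from ⟨Nat.pos_of_ne_zero hm0, hmem⟩)) (by omega)
  have hdn : d ∣ n := by
    have h1 : ((n % d : ℕ) : ZMod n) = -((d * (n / d) : ℕ) : ZMod n) := by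
      have := Nat.mod_add_div n d
      have h2 : ((n % d + d * (n / d) : ℕ) : ZMod n) = ((n:ℕ) : ZMod n) := by rw [this]
      rw [ZMod.natCast_self] at h2
      push_cast at h2 ⊢
      linear_combination h2
    have hmem : r ((n % d : ℕ) : ZMod n) ∈ K := by
      rw [h1]
      exact (inv_mem (multiples (n / d)) : (r _)⁻¹ ∈ K)
    have := small_zero _ (Nat.mod_lt _ hdpos) hmem
    omega
  have dvd_val : ∀ x : ZMod n, r x ∈ K → d ∣ x.val := by
    intro x hx
    have h1 : ((x.val % d : ℕ) : ZMod n) = x - ((d * (x.val / d) : ℕ) : ZMod n) := by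
      have := Nat.mod_add_div x.val d
      have h2 : ((x.val % d + d * (x.val / d) : ℕ) : ZMod n) = ((x.val : ℕ) : ZMod n) := by rw [this]
      rw [ZMod.natCast_rightInverse x] at h2
      push_cast at h2 ⊢
      linear_combination h2
    have hmem : r ((x.val % d : ℕ) : ZMod n) ∈ K := by
      rw [h1]
      have : r (x - ((d * (x.val / d) : ℕ) : ZMod n)) = r x * (r ((d * (x.val / d) : ℕ) : ZMod n))⁻¹ := by
        show _ = r (x + -_)
        congr 1; ring
      rw [this]
      exact mul_mem hx (inv_mem (multiples _))
    have := small_zero _ (Nat.mod_lt _ hdpos) hmem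
    omega
  have rev : ∀ x : ZMod n, d ∣ x.val → r x ∈ K := by
    rintro x ⟨c, hc⟩
    have : x = ((d * c : ℕ) : ZMod n) := by
      rw [← hc]
      exact (ZMod.natCast_rightInverse x).symm
    rw [this]
    exact multiples c
  have hmem_iff : ∀ x : ZMod n, r x ∈ K ↔ (d : ZMod n) ∣ x := by
    intro x
    rw [zdvd_iff hdn]
    exact ⟨dvd_val x, rev x⟩
  have hKeq : K = SubH d i := by
    ext x
    rcases x with u | u
    · exact (hmem_iff u).trans (r_mem_SubH).symm
    · show sr u ∈ K ↔ (d : ZMod n) ∣ u - i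
      constructor
      · intro hu
        have : sr u * sr i ∈ K := mul_mem hu hi
        have hmem : r (i - u) ∈ K := by
          rwa [sr_mul_sr] at this
        have := (hmem_iff _).mp hmem
        have e1 : u - i = -(i - u) := by ring
        rw [e1]
        exact dvd_neg.mpr this
      · intro hdvd
        have hmem : r (u - i) ∈ K := (hmem_iff _).mpr hdvd
        have : sr i * r (u - i) ∈ K := mul_mem hi hmem
        rw [sr_mul_r] at this
        have e1 : i + (u - i) = u := by ring
        rwa [e1] at this
  refine ⟨d, i, hdn, ?_, hKeq⟩
  by_contra h2
  push_neg at h2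
  have hdvd2 : d ∣ 2 := by interval_cases d <;> omega
  exact hK (hKeq ▸ SubH_normal_of_dvd_two hdvd2)
end
section
lemma bits_differ {c sv : ℕ} (hc : 0 < c) (hsv : sv < 2*c) :
    ((sv + c) % (2*c)) / c ≠ sv / c := by
  rcases lt_or_ge sv c with h | h
  · have e1 : (sv + c) % (2*c) = sv + c := Nat.mod_eq_of_lt (by omega)
    have e2 : (sv + c) / c = 1 := Nat.div_eq_of_lt_le (by omega) (by omega)
    have e3 : sv / c = 0 := Nat.div_eq_of_lt h
    rw [e1, e2, e3]; omega
  · have h1 : (sv + c) % (2*c) = sv - c := by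
      have e0 : sv + c = 2*c + (sv - c) := by omega
      rw [e0, Nat.add_mod_left, Nat.mod_eq_of_lt (by omega)]
    have e2 : (sv - c) / c = 0 := Nat.div_eq_of_lt (by omega)
    have e3 : sv / c = 1 := Nat.div_eq_of_lt_le (by omega) (by omega)
    rw [h1, e2, e3]; omega

variable [NeZero n]

lemma zdvd_two_mul {d : ℕ} (hd : d ∣ n) {x : ZMod n}
    (h : (d : ZMod n) ∣ 2 * x) : d ∣ 2 * x.val := by
  rw [two_mul] at h
  have := (zdvd_iff hd _).mp h
  rw [ZMod.val_add] at this
  rw [two_mul]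
  exact (Nat.dvd_mod_iff hd).mp this

lemma color_ne (hn : 3 ≤ n) {d : ℕ} {i j : ZMod n} (hd : d ∣ n) (h2 : 2 < d)
    (hdvd : (d : ZMod n) ∣ 2 * (i - j)) (hne : ¬ (d : ZMod n) ∣ (i - j)) :
    2 ∣ d ∧ (i.val % d) / (d/2) ≠ (j.val % d) / (d/2) := by
  set dv := (i - j).val with hdv
  have hd2dv : d ∣ 2 * dv := zdvd_two_mul hd hdvd
  have hndv : ¬ d ∣ dv := fun hc => hne ((zdvd_iff hd _).mpr hc)
  have h2d : 2 ∣ d := by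
    by_contra h2d
    have hodd : Odd d := Nat.odd_iff.mpr (by omega)
    exact hndv (hodd.coprime_two_right.dvd_of_dvd_mul_left hd2dv)
  obtain ⟨c, rfl⟩ : ∃ c, d = 2 * c := h2d
  have hc : 0 < c := by omega
  obtain ⟨s, hs⟩ := hd2dv
  have hdvcs : dv = c * s := by
    have : 2 * dv = 2 * (c * s) := by rw [hs]; ring
    exact Nat.eq_of_mul_eq_mul_left (by norm_num) this
  have hsodd : ¬ 2 ∣ s := by
    rintro ⟨t, rfl⟩
    exact hndv ⟨t, by rw [hdvcs]; ring⟩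
  obtain ⟨t, ht⟩ : ∃ t, s = 2 * t + 1 := ⟨s / 2, by omega⟩
  have hmod : dv % (2*c) = c := by
    have : dv = (2*c) * t + c := by rw [hdvcs, ht]; ring
    rw [this, Nat.mul_add_mod, Nat.mod_eq_of_lt (by omega)]
  have hival : i.val = (j.val + dv) % n := by
    have hij : j + (i - j) = i := by ring
    have := congrArg ZMod.val hij
    rw [ZMod.val_add] at this
    exact this.symm
  have hkey : i.val % (2*c) = (j.val % (2*c) + c) % (2*c) := by
    rw [hival, Nat.mod_mod_of_dvd _ hd, Nat.add_mod, hmod]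
  refine ⟨⟨c, rfl⟩, ?_⟩
  have hcc : 2 * c / 2 = c := by omega
  rw [hcc, hkey]
  exact bits_differ hc (Nat.mod_lt _ (by omega))
end

section
variable [NeZero n]

/-- The index finset: divisors `d > 2` of `n`, doubled when `d` is even. -/
def idx (n : ℕ) : Finset (ℕ × Bool) :=
  (n.divisors ×ˢ (Finset.univ : Finset Bool)).filter fun p => 2 < p.1 ∧ (2 ∣ p.1 ∨ p.2 = false)

lemma mem_idx {p : ℕ × Bool} : p ∈ idx n ↔ p.1 ∣ n ∧ n ≠ 0 ∧ 2 < p.1 ∧ (2 ∣ p.1 ∨ p.2 = false) := by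
  simp only [idx, Finset.mem_filter, Finset.mem_product, Nat.mem_divisors, Finset.mem_univ,
    true_and, and_true]
  tauto

/-- The offset used for the clique vertex of index `p`. -/
def offset (p : ℕ × Bool) : ZMod n := if p.2 then ((p.1 / 2 : ℕ) : ZMod n) else 0

lemma two_mul_offset {p : ℕ × Bool} (hp : p ∈ idx n) :
    2 * (offset p : ZMod n) = if p.2 then ((p.1 : ℕ) : ZMod n) else 0 := by
  obtain ⟨hd, hn0, h2, hb⟩ := mem_idx.mp hp
  rcases p with ⟨d, b⟩
  rcases b with _ | _
  · simp [offset]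
  · simp only [offset, if_true]
    have h2d : 2 ∣ d := by tauto
    have : (2 : ZMod n) * ((d / 2 : ℕ) : ZMod n) = ((2 * (d / 2) : ℕ) : ZMod n) := by push_cast; ring
    rw [this, Nat.two_mul_div_two_of_even (even_iff_two_dvd.mpr h2d)]

lemma offset_dvd_key {p q : ℕ × Bool} (hp : p ∈ idx n) (hq : q ∈ idx n) :
    ((Nat.gcd p.1 q.1 : ℕ) : ZMod n) ∣ 2 * ((offset p : ZMod n) - offset q) := by
  have e1 : 2 * ((offset p : ZMod n) - offset q) = 2 * offset p - 2 * offset q := by ring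
  rw [e1, two_mul_offset hp, two_mul_offset hq]
  have h1 : ((Nat.gcd p.1 q.1 : ℕ) : ZMod n) ∣ (if p.2 then ((p.1 : ℕ) : ZMod n) else 0) := by
    split
    · exact cast_dvd_cast_of_dvd (Nat.gcd_dvd_left _ _)
    · exact dvd_zero _
  have h2 : ((Nat.gcd p.1 q.1 : ℕ) : ZMod n) ∣ (if q.2 then ((q.1 : ℕ) : ZMod n) else 0) := by
    split
    · exact cast_dvd_cast_of_dvd (Nat.gcd_dvd_right _ _)
    · exact dvd_zero _
  exact dvd_sub h1 h2

lemma offset_inj {p q : ℕ × Bool} (hp : p ∈ idx n) (hq : q ∈ idx n)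
    (h : (SubH p.1 (offset p) : Subgroup (DihedralGroup n)) = SubH q.1 (offset q)) : p = q := by
  obtain ⟨hd, hn0, h2, hb⟩ := mem_idx.mp hp
  obtain ⟨hd', hn0', h2', hb'⟩ := mem_idx.mp hq
  have hde : p.1 = q.1 := SubH_d_eq hd hd' h
  have hdn : p.1 ≤ n := Nat.le_of_dvd (by omega) hd
  have hoff : (p.1 : ZMod n) ∣ offset p - offset q := by
    rw [hde] at h ⊢
    exact (SubH_eq_iff hd').mp h
  have hval : ¬ (p.1 : ZMod n) ∣ ((p.1 / 2 : ℕ) : ZMod n) := by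
    intro hcon
    have := (zdvd_iff hd _).mp hcon
    rw [ZMod.val_natCast, Nat.mod_eq_of_lt (by omega)] at this
    have := Nat.le_of_dvd (by omega) this
    omega
  have hb2 : p.2 = q.2 := by
    by_contra hbb
    rcases hp2 : p.2 with _ | _ <;> rcases hq2 : q.2 with _ | _
    · exact hbb (hp2.trans hq2.symm)
    · apply hval
      have : offset p - offset q = -(((p.1 / 2 : ℕ) : ZMod n)) := by
        simp [offset, hp2, hq2, hde]
      rw [this] at hoff
      exact dvd_neg.mp hoff
    · apply hval
      have : offset p - offset q = ((p.1 / 2 : ℕ) : ZMod n) := by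
        simp [offset, hp2, hq2, hde]
      rwa [this] at hoff
    · exact hbb (hp2.trans hq2.symm)
  exact Prod.ext hde hb2
end
section
variable [NeZero n]

theorem master (hn : 3 ≤ n) :
    (permGraphN (DihedralGroup n)).cliqueNum = (idx n).card ∧
    (permGraphN (DihedralGroup n)).chromaticNumber = ((idx n).card : ℕ∞) := by
  classical
  set V := {H : Subgroup (DihedralGroup n) // ¬ H.Normal} with hV
  letI : Fintype V := Fintype.ofFinite _
  -- the clique
  have hvm : ∀ p : ℕ × Bool, p ∈ idx n → ¬ (SubH p.1 (offset p) : Subgroup (DihedralGroup n)).Normal := by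
    intro p hp
    obtain ⟨hd, _, h2, _⟩ := mem_idx.mp hp
    exact SubH_not_normal hn hd h2
  set f : {p // p ∈ idx n} → V := fun p => ⟨SubH p.1.1 (offset p.1), hvm p.1 p.2⟩ with hf
  have hfinj : Function.Injective f := by
    rintro p q hpq
    have := congrArg Subtype.val hpq
    exact Subtype.ext (offset_inj p.2 q.2 this)
  set s : Finset V := (idx n).attach.image f with hs
  have hcard : s.card = (idx n).card := by
    rw [hs, Finset.card_image_of_injective _ hfinj, Finset.card_attach]
  have hclique : (permGraphN (DihedralGroup n)).IsClique ↑s := by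
    rintro x hx y hy hxy
    obtain ⟨p, -, rfl⟩ := Finset.mem_image.mp (Finset.mem_coe.mp hx)
    obtain ⟨q, -, rfl⟩ := Finset.mem_image.mp (Finset.mem_coe.mp hy)
    exact ⟨hxy, SubH_mul_comm (offset_dvd_key p.2 q.2)⟩
  -- the coloring
  have hcl : ∀ v : V, ∃ (d : ℕ) (i : ZMod n), d ∣ n ∧ 2 < d ∧ v.1 = SubH d i :=
    fun v => classify hn v.1 v.2
  choose D I hDdvd hD2 hKeq using hcl
  have hcol_mem : ∀ v : V,
      (D v, if 2 ∣ D v then decide ((I v).val % D v / (D v / 2) = 1) else false) ∈ idx n := by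
    intro v
    rw [mem_idx]
    refine ⟨hDdvd v, by omega, hD2 v, ?_⟩
    split
    · exact Or.inl ‹_›
    · exact Or.inr rfl
  set col : V → {p // p ∈ idx n} := fun v => ⟨_, hcol_mem v⟩ with hcol
  have hvalid : ∀ u v : V, (permGraphN (DihedralGroup n)).Adj u v → col u ≠ col v := by
    rintro u v ⟨hne, hcomm⟩ heq
    have hpair := congrArg Subtype.val heq
    have hDuv : D u = D v := congrArg Prod.fst hpair
    have hbool := congrArg Prod.snd hpair
    rw [hKeq u, hKeq v] at hcomm
    have hdvd := SubH_adj_dvd hcomm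
    rw [hDuv, Nat.gcd_self] at hdvd
    have hne' : (SubH (D v) (I u) : Subgroup (DihedralGroup n)) ≠ SubH (D v) (I v) := by
      intro hcon
      apply hne
      apply Subtype.ext
      rw [hKeq u, hKeq v, ← hcon, hDuv]
    have hnot : ¬ ((D v : ℕ) : ZMod n) ∣ (I u - I v) := fun hc =>
      hne' ((SubH_eq_iff (hDdvd v)).mpr hc)
    obtain ⟨h2d, hbit⟩ := color_ne hn (hDdvd v) (hD2 v) hdvd hnot
    simp only [hcol] at hbool
    rw [hDuv] at hbool
    rw [if_pos h2d, if_pos h2d] at hbool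
    have hiff := decide_eq_decide.mp hbool
    set x := (I u).val % D v / (D v / 2) with hx'
    set y := (I v).val % D v / (D v / 2) with hy'
    have hDv3 : 3 ≤ D v := hD2 v
    have hxlt : x < 2 := by
      apply Nat.div_lt_of_lt_mul
      have h1 : (I u).val % D v < D v := Nat.mod_lt _ (by omega)
      omega
    have hylt : y < 2 := by
      apply Nat.div_lt_of_lt_mul
      have h1 : (I v).val % D v < D v := Nat.mod_lt _ (by omega)
      omega
    have hsmall : ∀ m : ℕ, m < 2 → m = 0 ∨ m = 1 := by
      intro m hm
      rcases Nat.lt_succ_iff_lt_or_eq.mp hm with h | h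
      · exact Or.inl (Nat.lt_one_iff.mp h)
      · exact Or.inr h
    rcases hsmall x hxlt with h | h <;> rcases hsmall y hylt with h' | h'
    · exact hbit (h.trans h'.symm)
    · have hcon := hiff.mpr h'
      rw [h] at hcon
      exact Nat.zero_ne_one hcon
    · have hcon := hiff.mp h
      rw [h'] at hcon
      exact Nat.zero_ne_one hcon
    · exact hbit (h.trans h'.symm)
  have coloring : (permGraphN (DihedralGroup n)).Coloring {p // p ∈ idx n} :=
    SimpleGraph.Coloring.mk col (fun {u v} hadj => hvalid u v hadj)
  have hcolorable : (permGraphN (DihedralGroup n)).Colorable ((idx n).card) := by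
    have := coloring.colorable
    rwa [Fintype.card_coe] at this
  constructor
  · apply le_antisymm
    · refine csSup_le ⟨0, ⟨∅, SimpleGraph.isNClique_empty.mpr rfl⟩⟩ ?_
      rintro m ⟨t, ht⟩
      have := ht.isClique.card_le_of_colorable hcolorable
      exact ht.card_eq ▸ this
    · rw [← hcard]
      exact SimpleGraph.IsClique.card_le_cliqueNum (tc := hclique)
  · apply le_antisymm
    · exact hcolorable.chromaticNumber_le
    · have := hclique.card_le_chromaticNumber
      rwa [hcard] at this
end
section
lemma card_idx_odd (hn : 3 ≤ n) (ho : Odd n) : (idx n).card = n.divisors.card - 1 := by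
  classical
  have hn0 : n ≠ 0 := by omega
  haveI : NeZero n := ⟨hn0⟩
  have h2n : ¬ 2 ∣ n := by
    have := Nat.odd_iff.mp ho
    omega
  have himg : idx n = (n.divisors.filter (fun d => 2 < d)).image (fun d => (d, false)) := by
    ext p
    rw [mem_idx, Finset.mem_image]
    constructor
    · rintro ⟨hd, -, h2, hor⟩
      have hodd : ¬ 2 ∣ p.1 := fun h => h2n (h.trans hd)
      have hb : p.2 = false := by tauto
      refine ⟨p.1, Finset.mem_filter.mpr ⟨Nat.mem_divisors.mpr ⟨hd, hn0⟩, h2⟩, ?_⟩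
      rw [← hb]
    · rintro ⟨d, hd, rfl⟩
      obtain ⟨hd1, hd2⟩ := Finset.mem_filter.mp hd
      obtain ⟨hdvd, -⟩ := Nat.mem_divisors.mp hd1
      exact ⟨hdvd, hn0, hd2, Or.inr rfl⟩
  have hinj : Function.Injective (fun d : ℕ => (d, false)) := fun a b h => congrArg Prod.fst h
  rw [himg, Finset.card_image_of_injective _ hinj]
  have hsplit := Finset.card_filter_add_card_filter_not
    (s := n.divisors) (p := fun d => 2 < d)
  have hneg : n.divisors.filter (fun d => ¬ 2 < d) = {1} := by
    ext d
    simp only [Finset.mem_filter, Nat.mem_divisors, Finset.mem_singleton]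
    constructor
    · rintro ⟨⟨hd, -⟩, h2⟩
      have hd0 : d ≠ 0 := by rintro rfl; exact hn0 (Nat.eq_zero_of_zero_dvd hd)
      have : d ≠ 2 := by rintro rfl; exact h2n hd
      omega
    · rintro rfl
      exact ⟨⟨one_dvd n, hn0⟩, by omega⟩
  rw [hneg, Finset.card_singleton] at hsplit
  omega

lemma odd_divisors (hn0 : n ≠ 0) {α n' : ℕ} (ho : Odd n') (heq : n = 2^α * n') :
    n.divisors.filter (fun d => ¬ 2 ∣ d) = n'.divisors := by
  classical
  have hn'0 : n' ≠ 0 := by rintro rfl; simp at heq; omega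
  ext d
  simp only [Finset.mem_filter, Nat.mem_divisors]
  constructor
  · rintro ⟨⟨hd, -⟩, h2⟩
    have hodd : Odd d := Nat.odd_iff.mpr (by omega)
    have hcop : d.Coprime (2^α) := Nat.Coprime.pow_right α hodd.coprime_two_right
    rw [heq] at hd
    exact ⟨hcop.dvd_of_dvd_mul_left hd, hn'0⟩
  · rintro ⟨hd, -⟩
    refine ⟨⟨hd.trans ⟨2^α, by rw [heq]; ring⟩, hn0⟩, ?_⟩
    intro h2
    have : (2:ℕ) ∣ n' := h2.trans hd
    have := Nat.odd_iff.mp ho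
    omega

lemma card_idx_even (hn : 3 ≤ n) (α n' : ℕ) (ho : Odd n') (hα : 1 ≤ α)
    (heq : n = 2^α * n') : (idx n).card = (2*α+1) * n'.divisors.card - 3 := by
  classical
  have hn0 : n ≠ 0 := by omega
  haveI : NeZero n := ⟨hn0⟩
  have hn'0 : n' ≠ 0 := by rintro rfl; simp at heq; omega
  have h2n : 2 ∣ n := by
    rw [heq]
    exact Dvd.dvd.mul_right (dvd_pow_self 2 (by omega)) _
  set A := n.divisors.filter (fun d => 2 < d) with hA
  set B := n.divisors.filter (fun d => 2 < d ∧ 2 ∣ d) with hB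
  have himg : idx n = A.image (fun d => (d, false)) ∪ B.image (fun d => (d, true)) := by
    ext p
    rw [mem_idx, Finset.mem_union, Finset.mem_image, Finset.mem_image]
    simp only [hA, hB, Finset.mem_filter, Nat.mem_divisors]
    constructor
    · rintro ⟨hd, -, h2, hor⟩
      rcases hb : p.2 with _ | _
      · exact Or.inl ⟨p.1, ⟨⟨hd, hn0⟩, h2⟩, by rw [← hb]⟩
      · have h2d : 2 ∣ p.1 := by
          rcases hor with h | h
          · exact h
          · rw [hb] at h; exact absurd h (by simp)
        exact Or.inr ⟨p.1, ⟨⟨hd, hn0⟩, h2, h2d⟩, by rw [← hb]⟩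
    · rintro (⟨d, ⟨⟨hd, -⟩, h2⟩, rfl⟩ | ⟨d, ⟨⟨hd, -⟩, h2, h2d⟩, rfl⟩)
      · exact ⟨hd, hn0, h2, Or.inr rfl⟩
      · exact ⟨hd, hn0, h2, Or.inl h2d⟩
  have hinjf : Function.Injective (fun d : ℕ => (d, false)) := fun a b h => congrArg Prod.fst h
  have hinjt : Function.Injective (fun d : ℕ => (d, true)) := fun a b h => congrArg Prod.fst h
  have hdisj : Disjoint (A.image (fun d => (d, false))) (B.image (fun d => (d, true))) := by
    rw [Finset.disjoint_left]
    rintro p hp hq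
    obtain ⟨a, -, rfl⟩ := Finset.mem_image.mp hp
    obtain ⟨b, -, hb⟩ := Finset.mem_image.mp hq
    exact absurd (congrArg Prod.snd hb) (by simp)
  have hcard : (idx n).card = A.card + B.card := by
    rw [himg, Finset.card_union_of_disjoint hdisj,
      Finset.card_image_of_injective _ hinjf, Finset.card_image_of_injective _ hinjt]
  -- A.card + 2 = τ(n)
  have hAsplit := Finset.card_filter_add_card_filter_not
    (s := n.divisors) (p := fun d => 2 < d)
  have hAneg : n.divisors.filter (fun d => ¬ 2 < d) = {1, 2} := by
    ext d
    simp only [Finset.mem_filter, Nat.mem_divisors, Finset.mem_insert, Finset.mem_singleton]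
    constructor
    · rintro ⟨⟨hd, -⟩, h2⟩
      have hd0 : d ≠ 0 := by rintro rfl; exact hn0 (Nat.eq_zero_of_zero_dvd hd)
      omega
    · rintro (rfl | rfl)
      · exact ⟨⟨one_dvd n, hn0⟩, by omega⟩
      · exact ⟨⟨h2n, hn0⟩, by omega⟩
  have hA2 : A.card + 2 = n.divisors.card := by
    rw [hA]
    rw [hAneg] at hAsplit
    simpa using hAsplit
  -- B.card + (τ(n') + 1) = τ(n)
  have hBsplit := Finset.card_filter_add_card_filter_not
    (s := n.divisors) (p := fun d => 2 < d ∧ 2 ∣ d)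
  have hBneg : n.divisors.filter (fun d => ¬ (2 < d ∧ 2 ∣ d)) =
      n'.divisors ∪ {2} := by
    ext d
    simp only [Finset.mem_filter, Nat.mem_divisors, Finset.mem_union, Finset.mem_singleton,
      not_and_or]
    constructor
    · rintro ⟨⟨hd, -⟩, hcase⟩
      have hd0 : d ≠ 0 := by rintro rfl; exact hn0 (Nat.eq_zero_of_zero_dvd hd)
      rcases hcase with h | h
      · -- d ≤ 2 : d = 1 (odd, divides n') or d = 2
        rcases (by omega : d = 1 ∨ d = 2) with rfl | rfl
        · exact Or.inl ⟨one_dvd n', hn'0⟩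
        · exact Or.inr rfl
      · -- d odd
        have : d ∈ n.divisors.filter (fun x => ¬ 2 ∣ x) :=
          Finset.mem_filter.mpr ⟨Nat.mem_divisors.mpr ⟨hd, hn0⟩, h⟩
        rw [odd_divisors hn0 ho heq] at this
        exact Or.inl (Nat.mem_divisors.mp this)
    · rintro (h | rfl)
      · obtain ⟨hdn', -⟩ := h
        refine ⟨⟨hdn'.trans ⟨2^α, by rw [heq]; ring⟩, hn0⟩, Or.inr ?_⟩
        intro h2
        have : (2:ℕ) ∣ n' := h2.trans hdn'
        have := Nat.odd_iff.mp ho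
        omega
      · exact ⟨⟨h2n, hn0⟩, Or.inl (by omega)⟩
  have h2notmem : (2:ℕ) ∉ n'.divisors := by
    intro h
    have := (Nat.mem_divisors.mp h).1
    have := Nat.odd_iff.mp ho
    omega
  have hBneg_card : (n.divisors.filter (fun d => ¬ (2 < d ∧ 2 ∣ d))).card
      = n'.divisors.card + 1 := by
    rw [hBneg, Finset.card_union_of_disjoint (by
      rw [Finset.disjoint_singleton_right]; exact h2notmem), Finset.card_singleton]
  have hB2 : B.card + (n'.divisors.card + 1) = n.divisors.card := by
    rw [hB]
    rw [hBneg_card] at hBsplit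
    exact hBsplit
  -- τ(n) = (α+1) τ(n')
  have hcop : (2^α).Coprime n' := Nat.Coprime.pow_left α ho.coprime_two_left
  have htau : n.divisors.card = (α + 1) * n'.divisors.card := by
    rw [heq, hcop.card_divisors_mul, Nat.divisors_prime_pow Nat.prime_two,
      Finset.card_map, Finset.card_range]
  have hT1 : 1 ≤ n'.divisors.card := by
    have : (1:ℕ) ∈ n'.divisors := Nat.mem_divisors.mpr ⟨one_dvd _, hn'0⟩
    exact Finset.card_pos.mpr ⟨1, this⟩
  have hkey : (2*α+1) * n'.divisors.card + n'.divisors.card = 2 * ((α+1) * n'.divisors.card) := by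
    ring
  omega
end

end PermDih

/-- clique number and chromatic number of `Γ_N(D_n)`: both equal
`τ(n) - 1` when `n` is odd, and both equal `(2α+1)τ(n') - 3` when
`n = 2^α n'` with `n'` odd, `α ≥ 1`. In particular `Γ_N(D_n)` is weakly
perfect. -/
theorem stmt_3 (n : ℕ) (hn : 3 ≤ n) :
    (Odd n →
      (permGraphN (DihedralGroup n)).cliqueNum = n.divisors.card - 1 ∧
      (permGraphN (DihedralGroup n)).chromaticNumber =
        ((n.divisors.card - 1 : ℕ) : ℕ∞)) ∧
    (∀ α n' : ℕ, Odd n' → 1 ≤ α → n = 2 ^ α * n' →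
      (permGraphN (DihedralGroup n)).cliqueNum =
        (2 * α + 1) * n'.divisors.card - 3 ∧
      (permGraphN (DihedralGroup n)).chromaticNumber =
        (((2 * α + 1) * n'.divisors.card - 3 : ℕ) : ℕ∞)) := by
  haveI : NeZero n := ⟨by omega⟩
  obtain ⟨hclique, hchrom⟩ := PermDih.master (n := n) hn
  constructor
  · intro ho
    constructor
    · rw [hclique, PermDih.card_idx_odd hn ho]
    · rw [hchrom, PermDih.card_idx_odd hn ho]
  · intro α n' ho hα heq
    constructor
    · rw [hclique, PermDih.card_idx_even hn α n' ho hα heq]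
    · rw [hchrom, PermDih.card_idx_even hn α n' ho hα heq]
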